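/- arXiv:1506.00684 — 2 statements merged into one kernel-verified Lean document; each statement's English description precedes it below -/
import Mathlib

section
/- Let ν ≥ 2, c ≥ 1, let t be defined as t = ⌈(c-1)/ν⌉ + 1 if c > (ν-1)² and t = ⌈c/(ν-1)⌉ otherwise, and let α = max{(νt-ν+1)/(tc), 1/t}. Then (α - 1/t)·(ν-1)·(t-1) + α·(c - (ν-1)(t-1)) ≥ 1. -/
theorem stmt7 (ν c : ℤ) (hν : 2 ≤ ν) (hc : 1 ≤ c) (t : ℤ)
    (ht : t = if (ν - 1) ^ 2 < c then ⌈((c : ℚ) - 1) / (ν : ℚ)⌉ + 1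
              else ⌈(c : ℚ) / ((ν : ℚ) - 1)⌉)
    (α : ℚ) (hα : α = max (((ν : ℚ) * t - ν + 1) / ((t : ℚ) * c)) (1 / (t : ℚ))) :
    1 ≤ (α - 1 / (t : ℚ)) * ((ν : ℚ) - 1) * ((t : ℚ) - 1) +
        α * ((c : ℚ) - ((ν : ℚ) - 1) * ((t : ℚ) - 1)) := by
  have hνq : (2:ℚ) ≤ (ν:ℚ) := by exact_mod_cast hν
  have hcq : (1:ℚ) ≤ (c:ℚ) := by exact_mod_cast hc
  have ht0 : 0 < t := by
    rw [ht]
    split_ifs with h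
    · have : (0:ℤ) ≤ ⌈((c : ℚ) - 1) / (ν : ℚ)⌉ :=
        Int.ceil_nonneg (div_nonneg (by linarith) (by linarith))
      omega
    · have : 0 < ⌈(c : ℚ) / ((ν : ℚ) - 1)⌉ :=
        Int.ceil_pos.mpr (div_pos (by linarith) (by linarith))
      omega
  have htq : (0:ℚ) < (t:ℚ) := by exact_mod_cast ht0
  have hcq0 : (0:ℚ) < (c:ℚ) := by linarith
  have hα1 : ((ν : ℚ) * t - ν + 1) / ((t : ℚ) * c) ≤ α := hα ▸ le_max_left _ _
  have key : (ν : ℚ) * t - ν + 1 ≤ α * ((t:ℚ) * c) :=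
    (div_le_iff₀ (mul_pos htq hcq0)).mp hα1
  have heq : (α - 1 / (t : ℚ)) * ((ν : ℚ) - 1) * ((t : ℚ) - 1) +
        α * ((c : ℚ) - ((ν : ℚ) - 1) * ((t : ℚ) - 1))
      = α * c - ((ν:ℚ) - 1) * ((t:ℚ) - 1) / t := by
    field_simp
    ring
  rw [heq, le_sub_iff_add_le]
  have h2 : (1:ℚ) + ((ν:ℚ) - 1) * ((t:ℚ) - 1) / t
      = ((t:ℚ) + ((ν:ℚ) - 1) * ((t:ℚ) - 1)) / t := by
    field_simp
  rw [h2, div_le_iff₀ htq]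
  linear_combination key
end

section
/- For positive integers c and ν with 1 ≤ c, ν ≥ 2, and t defined piecewise as in the construction (t = ⌈(c-1)/ν⌉+1 if c > (ν-1)², t = ⌈c/(ν-1)⌉ otherwise), the storage cost α = max{(νt-ν+1)/(tc), 1/t} satisfies α ≥ ν/(c+ν-1). -/
theorem stmt16 (ν c : ℤ) (hν : 2 ≤ ν) (hc : 1 ≤ c) (t : ℤ)
    (ht : t = if (ν - 1) ^ 2 < c then ⌈((c : ℚ) - 1) / (ν : ℚ)⌉ + 1
              else ⌈(c : ℚ) / ((ν : ℚ) - 1)⌉)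
    (α : ℚ) (hα : α = max (((ν : ℚ) * t - ν + 1) / ((t : ℚ) * c)) (1 / (t : ℚ))) :
    (ν : ℚ) / ((c : ℚ) + ν - 1) ≤ α := by
  subst hα
  have hνQ : (2 : ℚ) ≤ (ν : ℚ) := by exact_mod_cast hν
  have hcQ : (1 : ℚ) ≤ (c : ℚ) := by exact_mod_cast hc
  have ht1 : 1 ≤ t := by
    rw [ht]
    split_ifs with h
    · have : (0 : ℤ) ≤ ⌈((c : ℚ) - 1) / (ν : ℚ)⌉ := by
        apply Int.ceil_nonneg
        apply div_nonneg <;> linarith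
      linarith
    · have : (0 : ℤ) < ⌈(c : ℚ) / ((ν : ℚ) - 1)⌉ := by
        apply Int.ceil_pos.mpr
        apply div_pos <;> linarith
      linarith
  have htQ : (1 : ℚ) ≤ (t : ℚ) := by exact_mod_cast ht1
  have htpos : (0 : ℚ) < (t : ℚ) := by linarith
  have hcpos : (0 : ℚ) < (c : ℚ) := by linarith
  have hden : (0 : ℚ) < (c : ℚ) + ν - 1 := by linarith
  rcases le_total ((c : ℚ) + ν - 1) ((ν : ℚ) * t) with hle | hle
  · refine le_trans ?_ (le_max_left _ _)
    rw [div_le_div_iff₀ hden (mul_pos htpos hcpos)]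
    nlinarith [mul_nonneg (by linarith : (0:ℚ) ≤ (ν:ℚ) - 1) (by linarith : (0:ℚ) ≤ (ν:ℚ) * t - ((c:ℚ) + ν - 1))]
  · refine le_trans ?_ (le_max_right _ _)
    rw [div_le_div_iff₀ hden htpos]
    linarith
end
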